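/- Let G be an edge-colored complete graph containing no monochromatic cycle on 2n+1 vertices, and let Y, Z ⊆ V(G) be disjoint sets with |Y| ≥ n and |Z| ≥ n such that every edge between Y and Z has the same color (say blue). Then: (1) no vertex of V(G) \ (Y ∪ Z) is joined in blue to all vertices of Y ∪ Z; (2) if |Z| ≥ n+1, then the induced complete graph on Z has no blue edge; and (3) if |Y| ≥ n+1, then the induced complete graph on Y has no blue edge. -/

import Mathlib

/-- A Gallai coloring: a symmetric edge-coloring of a complete graph with no
rainbow triangle (no triangle whose three edges get three distinct colors). -/
def IsGallai {V C : Type*} (c : V → V → C) : Prop :=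
  (∀ u v, c u v = c v u) ∧
  ∀ u v w : V, u ≠ v → v ≠ w → u ≠ w →
    (c u v = c v w ∨ c v w = c u w ∨ c u v = c u w)

/-- The coloring `c` contains a cycle on `m` vertices all of whose edges have color `col`. -/
def HasCycleColor {V C : Type*} (c : V → V → C) (m : ℕ) (col : C) : Prop :=
  ∃ f : ZMod m → V, Function.Injective f ∧ ∀ i : ZMod m, c (f i) (f (i + 1)) = col

/-- The coloring `c` contains a monochromatic cycle on `m` vertices. -/
def HasMonoCycle {V C : Type*} (c : V → V → C) (m : ℕ) : Prop :=
  ∃ col : C, HasCycleColor c m col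

private lemma exists_emb {V : Type*} (S : Set V) (hS : S.Finite) (n : ℕ) (h : n ≤ S.ncard) :
    ∃ f : Fin n → V, Function.Injective f ∧ ∀ i, f i ∈ S := by
  obtain ⟨t, hts, htn⟩ := Set.exists_subset_card_eq h
  have htfin : t.Finite := hS.subset hts
  haveI := htfin.fintype
  have hcard : t.toFinset.card = n := by
    rw [← Set.ncard_eq_toFinset_card']; exact htn
  let e := Finset.equivFinOfCardEq hcard
  refine ⟨fun i => (e.symm i : V), ?_, fun i => ?_⟩
  · intro i j hij
    have : (e.symm i : t.toFinset) = e.symm j := Subtype.ext hij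
    simpa using e.symm.injective this
  · exact hts (Set.mem_toFinset.mp (e.symm i).2)

private lemma stitch {V C : Type*} (c : V → V → C) (n : ℕ) (col : C)
    (a : Fin (n+1) → V) (b : Fin n → V)
    (ha : Function.Injective a) (hb : Function.Injective b)
    (hab : ∀ i j, a i ≠ b j)
    (h1 : ∀ k : Fin n, c (a k.castSucc) (b k) = col)
    (h2 : ∀ k : Fin n, c (b k) (a k.succ) = col)
    (h3 : c (a (Fin.last n)) (a 0) = col) :
    HasCycleColor c (2*n+1) col := by
  haveI : NeZero (2*n+1) := ⟨by omega⟩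
  set g : Fin (2*n+1) → V := fun i =>
    if h : i.val % 2 = 0 then a ⟨i.val / 2, by have := i.isLt; omega⟩
    else b ⟨i.val / 2, by have := i.isLt; omega⟩ with hg
  have hginj : Function.Injective g := by
    intro i j hij
    have hi := i.isLt; have hj := j.isLt
    simp only [hg] at hij
    split_ifs at hij with h h' h'
    · have := congrArg Fin.val (ha hij)
      simp only at this
      exact Fin.ext (by omega)
    · exact absurd hij (hab _ _)
    · exact absurd hij.symm (hab _ _)
    · have := congrArg Fin.val (hb hij)
      simp only at this
      exact Fin.ext (by omega)
  refine ⟨fun i => g ⟨i.val, ZMod.val_lt i⟩, ?_, ?_⟩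
  · intro i j hij
    have := congrArg Fin.val (hginj hij)
    exact ZMod.val_injective _ this
  · intro i
    have hvl : i.val < 2*n+1 := ZMod.val_lt i
    show c (g ⟨i.val, hvl⟩) (g ⟨(i+1).val, ZMod.val_lt _⟩) = col
    have hsucc : (i + 1).val = (i.val + 1) % (2*n+1) := by
      rw [ZMod.val_add, ZMod.val_one_eq_one_mod, Nat.add_mod, Nat.mod_mod_of_dvd _ dvd_rfl,
        ← Nat.add_mod]
    rcases Nat.lt_or_ge i.val (2*n) with hlt | hge
    · have hs : (i + 1).val = i.val + 1 := by rw [hsucc, Nat.mod_eq_of_lt (by omega)]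
      rcases Nat.even_or_odd i.val with ⟨k, hk⟩ | ⟨k, hk⟩
      · -- i.val = 2k, even
        have hgi : g ⟨i.val, hvl⟩ = a ⟨k, by omega⟩ := by
          simp only [hg]
          rw [dif_pos (by omega)]
          congr 1; exact Fin.ext (by simp; omega)
        have hgs : g ⟨(i+1).val, ZMod.val_lt _⟩ = b ⟨k, by omega⟩ := by
          simp only [hg]
          rw [dif_neg (by omega)]
          congr 1; exact Fin.ext (by simp [hs]; omega)
        rw [hgi, hgs]
        have := h1 ⟨k, by omega⟩
        convert this using 2
        exact congrArg a (Fin.ext (by simp))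
      · -- i.val = 2k+1, odd
        have hgi : g ⟨i.val, hvl⟩ = b ⟨k, by omega⟩ := by
          simp only [hg]
          rw [dif_neg (by omega)]
          congr 1; exact Fin.ext (by simp; omega)
        have hgs : g ⟨(i+1).val, ZMod.val_lt _⟩ = a ⟨k+1, by omega⟩ := by
          simp only [hg]
          rw [dif_pos (by omega)]
          congr 1; exact Fin.ext (by simp [hs]; omega)
        rw [hgi, hgs]
        have := h2 ⟨k, by omega⟩
        convert this using 2
        exact congrArg a (Fin.ext (by simp))
    · -- i.val = 2n
      have hv2n : i.val = 2*n := by omega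
      have hs : (i + 1).val = 0 := by rw [hsucc, hv2n]; simp
      have hgi : g ⟨i.val, hvl⟩ = a (Fin.last n) := by
        simp only [hg]
        rw [dif_pos (by omega)]
        congr 1; exact Fin.ext (by simp [hv2n, Fin.last])
      have hgs : g ⟨(i+1).val, ZMod.val_lt _⟩ = a 0 := by
        simp only [hg]
        rw [dif_pos (by omega)]
        congr 1; exact Fin.ext (by simp [hs])
      rw [hgi, hgs]; exact h3

theorem lemma_L {V C : Type*} [Fintype V] (n : ℕ) (c : V → V → C)
    (hsym : ∀ u v, c u v = c v u)
    (hno : ¬ HasMonoCycle c (2 * n + 1))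
    (Y Z : Set V) (blue : C) (hYZ : Disjoint Y Z)
    (hY : n ≤ Y.ncard) (hZ : n ≤ Z.ncard)
    (hblue : ∀ y ∈ Y, ∀ z ∈ Z, c y z = blue) :
    (∀ v ∈ (Y ∪ Z)ᶜ, ¬ (∀ w ∈ Y ∪ Z, c v w = blue)) ∧
    (n + 1 ≤ Z.ncard → ∀ z1 ∈ Z, ∀ z2 ∈ Z, z1 ≠ z2 → c z1 z2 ≠ blue) ∧
    (n + 1 ≤ Y.ncard → ∀ y1 ∈ Y, ∀ y2 ∈ Y, y1 ≠ y2 → c y1 y2 ≠ blue) := by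
  classical
  -- n = 0 : any vertex gives a monochromatic 1-cycle
  rcases Nat.eq_zero_or_pos n with rfl | hn
  · have hV : ∀ v : V, False := by
      intro v
      refine hno ⟨c v v, fun _ => v, ?_, fun i => rfl⟩
      intro x y _
      exact Subsingleton.elim (α := Fin 1) x y
    refine ⟨fun v _ _ => hV v, fun _ z1 _ _ _ _ _ => hV z1, fun _ y1 _ _ _ _ _ => hV y1⟩
  obtain ⟨m, rfl⟩ : ∃ m, n = m + 1 := ⟨n - 1, by omega⟩
  set n := m + 1 with hn
  obtain ⟨yf, hyfi, hyfm⟩ := exists_emb Y (Set.toFinite Y) n hY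
  obtain ⟨zf, hzfi, hzfm⟩ := exists_emb Z (Set.toFinite Z) n hZ
  refine ⟨?_, ?_, ?_⟩
  · -- part 1
    intro v hv hall
    have hvY : v ∉ Y := fun h => hv (Or.inl h)
    have hvZ : v ∉ Z := fun h => hv (Or.inr h)
    apply hno
    refine ⟨blue, ?_⟩
    have := stitch c n blue
      (fun j => if h : j.val < n then yf ⟨j.val, h⟩ else v) zf ?_ hzfi ?_ ?_ ?_ ?_
    · exact this
    · intro i j hij
      by_cases hi : i.val < n <;> by_cases hj : j.val < n <;> simp [hi, hj] at hij
      · have := congrArg Fin.val (hyfi hij); simp at this; exact Fin.ext (by omega)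
      · exact absurd (hij ▸ hyfm ⟨i.val, hi⟩) hvY
      · exact absurd (hij ▸ hvY) (fun h => h (hyfm ⟨j.val, hj⟩))
      · exact Fin.ext (by have := i.isLt; have := j.isLt; omega)
    · intro i j
      by_cases hi : i.val < n <;> simp [hi]
      · intro h; exact hYZ.ne_of_mem (hyfm _) (hzfm j) h
      · intro h; exact hvZ (h ▸ hzfm j)
    · intro k
      have hk : (k.castSucc).val < n := k.isLt
      simp only [dif_pos hk]
      exact hblue _ (hyfm _) _ (hzfm k)
    · intro k
      by_cases hk : (k.succ).val < n
      · simp only [dif_pos hk]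
        rw [hsym]
        exact hblue _ (hyfm _) _ (hzfm k)
      · simp only [dif_neg hk]
        rw [hsym]
        exact hall _ (Or.inr (hzfm k))
    · have h1 : ¬ ((Fin.last n).val < n) := by simp
      have h2 : ((0 : Fin (n+1)).val < n) := by simp; omega
      simp only [dif_neg h1, dif_pos h2]
      exact hall _ (Or.inl (hyfm _))
  · -- part 2 : no blue edge inside Z when |Z| ≥ n+1
    intro hZ1 z1 hz1 z2 hz2 hne hcol
    obtain ⟨mid, hmidi, hmidm⟩ := exists_emb (Z \ {z1, z2}) (Set.toFinite _) m (by
      have h2 : ({z1, z2} : Set V).ncard = 2 := Set.ncard_pair hne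
      have hsub : ({z1, z2} : Set V) ⊆ Z := by
        rintro x (rfl | rfl) <;> assumption
      rw [Set.ncard_diff hsub (Set.toFinite _), h2]
      omega)
    apply hno
    refine ⟨blue, ?_⟩
    have hmZ : ∀ i, mid i ∈ Z := fun i => (hmidm i).1
    have hm1 : ∀ i, mid i ≠ z1 := fun i h => (hmidm i).2 (Or.inl h)
    have hm2 : ∀ i, mid i ≠ z2 := fun i h => (hmidm i).2 (Or.inr h)
    set a : Fin (n+1) → V := fun j =>
      if h0 : j.val = 0 then z2 else if hj : j.val = n then z1 else
        mid ⟨j.val - 1, by have := j.isLt; omega⟩ with hadef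
    have haZ : ∀ j, a j ∈ Z := by
      intro j
      simp only [hadef]
      split_ifs with h h'
      · exact hz2
      · exact hz1
      · exact hmZ _
    have hainj : Function.Injective a := by
      intro i j hij
      have hi := i.isLt; have hj := j.isLt
      simp only [hadef] at hij
      split_ifs at hij with h1' h2' h2' h3' h4' h4'
      · exact Fin.ext (by omega)
      · exact absurd hij.symm hne
      · exact absurd hij.symm (hm2 _)
      · exact absurd hij hne
      · exact Fin.ext (by omega)
      · exact absurd hij.symm (hm1 _)
      · exact absurd hij (hm2 _)
      · exact absurd hij (hm1 _)
      · have := congrArg Fin.val (hmidi hij); simp only at this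
        exact Fin.ext (by omega)
    have := stitch c n blue a yf hainj hyfi ?_ ?_ ?_ ?_
    · exact this
    · intro i j h
      exact hYZ.ne_of_mem (hyfm j) (haZ i) h.symm
    · intro k
      rw [hsym]
      exact hblue _ (hyfm k) _ (haZ _)
    · intro k
      exact hblue _ (hyfm k) _ (haZ _)
    · have hl : a (Fin.last n) = z1 := by
        simp only [hadef]
        rw [dif_neg (by simp only [Fin.val_last]; omega)]
        simp [Fin.val_last]
      have h0 : a 0 = z2 := by simp [hadef]
      rw [hl, h0]; exact hcol
  · -- part 3 : no blue edge inside Y when |Y| ≥ n+1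
    intro hY1 y1 hy1 y2 hy2 hne hcol
    obtain ⟨mid, hmidi, hmidm⟩ := exists_emb (Y \ {y1, y2}) (Set.toFinite _) m (by
      have h2 : ({y1, y2} : Set V).ncard = 2 := Set.ncard_pair hne
      have hsub : ({y1, y2} : Set V) ⊆ Y := by
        rintro x (rfl | rfl) <;> assumption
      rw [Set.ncard_diff hsub (Set.toFinite _), h2]
      omega)
    apply hno
    refine ⟨blue, ?_⟩
    have hmY : ∀ i, mid i ∈ Y := fun i => (hmidm i).1
    have hm1 : ∀ i, mid i ≠ y1 := fun i h => (hmidm i).2 (Or.inl h)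
    have hm2 : ∀ i, mid i ≠ y2 := fun i h => (hmidm i).2 (Or.inr h)
    set a : Fin (n+1) → V := fun j =>
      if h0 : j.val = 0 then y2 else if hj : j.val = n then y1 else
        mid ⟨j.val - 1, by have := j.isLt; omega⟩ with hadef
    have haY : ∀ j, a j ∈ Y := by
      intro j
      simp only [hadef]
      split_ifs with h h'
      · exact hy2
      · exact hy1
      · exact hmY _
    have hainj : Function.Injective a := by
      intro i j hij
      have hi := i.isLt; have hj := j.isLt
      simp only [hadef] at hij
      split_ifs at hij with h1' h2' h2' h3' h4' h4'
      · exact Fin.ext (by omega)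
      · exact absurd hij.symm hne
      · exact absurd hij.symm (hm2 _)
      · exact absurd hij hne
      · exact Fin.ext (by omega)
      · exact absurd hij.symm (hm1 _)
      · exact absurd hij (hm2 _)
      · exact absurd hij (hm1 _)
      · have := congrArg Fin.val (hmidi hij); simp only at this
        exact Fin.ext (by omega)
    have := stitch c n blue a zf hainj hzfi ?_ ?_ ?_ ?_
    · exact this
    · intro i j h
      exact hYZ.ne_of_mem (haY i) (hzfm j) h
    · intro k
      exact hblue _ (haY _) _ (hzfm k)
    · intro k
      rw [hsym]
      exact hblue _ (haY _) _ (hzfm k)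
    · have hl : a (Fin.last n) = y1 := by
        simp only [hadef]
        rw [dif_neg (by simp only [Fin.val_last]; omega)]
        simp [Fin.val_last]
      have h0 : a 0 = y2 := by simp [hadef]
      rw [hl, h0]; exact hcol
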